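/- Let R be the subgroup of VB_n generated by ρ_1, …, ρ_{n−1}. Then R acts by conjugation on the set { λ_{kl} : 1 ≤ k ≠ l ≤ n } (i.e., for every w ∈ R and every pair (k,l) with k ≠ l there is a pair (k',l') with k' ≠ l' such that w λ_{kl} w^{−1} = λ_{k'l'}), and this action is transitive: for any pairs (k,l) and (k',l') with k ≠ l and k' ≠ l' there exists w ∈ R with w λ_{kl} w^{−1} = λ_{k'l'}. -/
import Mathlib


/-- Generators of the virtual braid group `VB n`:
`Sum.inl i` is the braid generator σ_{i+1} and `Sum.inr i` is the virtual
generator ρ_{i+1} (0-based index `i : Fin (n-1)`, paper indices are 1-based). -/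
abbrev VBGen (n : ℕ) := Fin (n - 1) ⊕ Fin (n - 1)

/-- σ-letter in the free group. -/
def fS {n : ℕ} (i : Fin (n - 1)) : FreeGroup (VBGen n) := FreeGroup.of (Sum.inl i)

/-- ρ-letter in the free group. -/
def fR {n : ℕ} (i : Fin (n - 1)) : FreeGroup (VBGen n) := FreeGroup.of (Sum.inr i)

/-- The defining relators of the virtual braid group `VB_n`. -/
def vbRels (n : ℕ) : Set (FreeGroup (VBGen n)) :=
  {r | (∃ i j : Fin (n - 1), (i : ℕ) + 1 = (j : ℕ) ∧
          r = fS i * fS j * fS i * (fS j * fS i * fS j)⁻¹) ∨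
       (∃ i j : Fin (n - 1), (i : ℕ) + 2 ≤ (j : ℕ) ∧
          r = fS i * fS j * (fS j * fS i)⁻¹) ∨
       (∃ i j : Fin (n - 1), (i : ℕ) + 1 = (j : ℕ) ∧
          r = fR i * fR j * fR i * (fR j * fR i * fR j)⁻¹) ∨
       (∃ i j : Fin (n - 1), (i : ℕ) + 2 ≤ (j : ℕ) ∧
          r = fR i * fR j * (fR j * fR i)⁻¹) ∨
       (∃ i : Fin (n - 1), r = fR i * fR i) ∨
       (∃ i j : Fin (n - 1), ((i : ℕ) + 2 ≤ (j : ℕ) ∨ (j : ℕ) + 2 ≤ (i : ℕ)) ∧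
          r = fS i * fR j * (fR j * fS i)⁻¹) ∨
       (∃ i j : Fin (n - 1), (i : ℕ) + 1 = (j : ℕ) ∧
          r = fR i * fR j * fS i * (fS j * fR i * fR j)⁻¹)}

/-- The virtual braid group `VB_n` as a presented group. -/
abbrev VB (n : ℕ) := PresentedGroup (vbRels n)

/-- The generator σ_i of `VB n`, with the paper's 1-based index `1 ≤ i ≤ n-1`
(junk value `1` outside that range). -/
def sig {n : ℕ} (i : ℕ) : VB n :=
  if h : 1 ≤ i ∧ i ≤ n - 1 then PresentedGroup.of (Sum.inl ⟨i - 1, by omega⟩) else 1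

/-- The generator ρ_i of `VB n`, with the paper's 1-based index. -/
def rho {n : ℕ} (i : ℕ) : VB n :=
  if h : 1 ≤ i ∧ i ≤ n - 1 then PresentedGroup.of (Sum.inr ⟨i - 1, by omega⟩) else 1

/-- The ascending product ρ_a ρ_{a+1} ⋯ ρ_b (equal to `1` if `a > b`). -/
def asc {n : ℕ} (a b : ℕ) : VB n := ((List.range' a (b + 1 - a)).map (rho (n := n))).prod

/-- The descending product ρ_b ρ_{b-1} ⋯ ρ_a (equal to `1` if `a > b`). -/
def desc {n : ℕ} (a b : ℕ) : VB n :=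
  (((List.range' a (b + 1 - a)).map (rho (n := n))).reverse).prod

/-- λ_{k l} for 1-based indices `k ≠ l`:
for `k < l`, λ_{k l} = ρ_{l-1} ⋯ ρ_{k+1} (ρ_k σ_k⁻¹) ρ_{k+1} ⋯ ρ_{l-1};
for `l < k`, λ_{k l} = ρ_{k-1} ⋯ ρ_{l+1} (σ_l⁻¹ ρ_l) ρ_{l+1} ⋯ ρ_{k-1}. -/
def lam {n : ℕ} (k l : ℕ) : VB n :=
  if k < l then desc (k + 1) (l - 1) * (rho k * (sig k)⁻¹) * asc (k + 1) (l - 1)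
  else desc (l + 1) (k - 1) * ((sig l)⁻¹ * rho l) * asc (l + 1) (k - 1)

/-- `ν : VB_n → S_n` is characterized by sending both σ_i and ρ_i to the
transposition (i, i+1). -/
def IsNu {n : ℕ} (ν : VB n →* Equiv.Perm (Fin n)) : Prop :=
  ∀ i : Fin (n - 1),
    ν (PresentedGroup.of (Sum.inl i)) =
      Equiv.swap ⟨(i : ℕ), by have := i.isLt; omega⟩ ⟨(i : ℕ) + 1, by have := i.isLt; omega⟩ ∧
    ν (PresentedGroup.of (Sum.inr i)) =
      Equiv.swap ⟨(i : ℕ), by have := i.isLt; omega⟩ ⟨(i : ℕ) + 1, by have := i.isLt; omega⟩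

/-- The subgroup of `VB n` generated by the ρ-generators (a copy of `S_n`). -/
def Rsub (n : ℕ) : Subgroup (VB n) :=
  Subgroup.closure (Set.range fun i : Fin (n - 1) => (PresentedGroup.of (Sum.inr i) : VB n))

/-- The subgroup of `VB n` generated by the λ_{k l} with `1 ≤ k ≠ l ≤ m`;
for `m = n` this is the virtual pure braid group `VP_n`, and in general it is
the canonical copy of `VP_m` inside `VP_n`. -/
def VPsub (n : ℕ) (m : ℕ) : Subgroup (VB n) :=
  Subgroup.closure {x | ∃ k l : ℕ, 1 ≤ k ∧ k ≤ m ∧ 1 ≤ l ∧ l ≤ m ∧ k ≠ l ∧ x = lam k l}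

/-- `V_i^*`: the normal closure, inside the copy of `VP_{i+1}`, of the subgroup
`V_i = ⟨λ_{k,i+1}, λ_{i+1,k} : 1 ≤ k ≤ i⟩`. -/
def Vstar (n : ℕ) (i : ℕ) : Subgroup (VB n) :=
  Subgroup.closure {x | ∃ g ∈ VPsub n (i + 1), ∃ k : ℕ, 1 ≤ k ∧ k ≤ i ∧
    (x = g⁻¹ * lam k (i + 1) * g ∨ x = g⁻¹ * lam (i + 1) k * g)}
section Dev
variable {n : ℕ}

lemma rel_one {r : FreeGroup (VBGen n)} (h : r ∈ vbRels n) :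
    PresentedGroup.mk (vbRels n) r = 1 := by
  rw [PresentedGroup.mk]
  exact (QuotientGroup.eq_one_iff r).mpr (Subgroup.subset_normalClosure h)

lemma sig_def (i : ℕ) (h1 : 1 ≤ i) (h2 : i ≤ n - 1) :
    (sig i : VB n) = PresentedGroup.of (Sum.inl ⟨i - 1, by omega⟩) := by
  rw [sig, dif_pos ⟨h1, h2⟩]

lemma rho_def (i : ℕ) (h1 : 1 ≤ i) (h2 : i ≤ n - 1) :
    (rho i : VB n) = PresentedGroup.of (Sum.inr ⟨i - 1, by omega⟩) := by
  rw [rho, dif_pos ⟨h1, h2⟩]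

lemma sig_out (i : ℕ) (h : ¬ (1 ≤ i ∧ i ≤ n - 1)) : (sig i : VB n) = 1 := by
  rw [sig, dif_neg h]

lemma rho_out (i : ℕ) (h : ¬ (1 ≤ i ∧ i ≤ n - 1)) : (rho i : VB n) = 1 := by
  rw [rho, dif_neg h]

lemma mk_fS (i : Fin (n-1)) : PresentedGroup.mk (vbRels n) (fS i) = sig (i+1) := by
  have hi := i.isLt
  rw [sig_def (i+1) (by omega) (by omega)]; rfl

lemma mk_fR (i : Fin (n-1)) : PresentedGroup.mk (vbRels n) (fR i) = rho (i+1) := by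
  have hi := i.isLt
  rw [rho_def (i+1) (by omega) (by omega)]; rfl

-- ρ_i² = 1, unconditionally
lemma rho_sq (i : ℕ) : (rho i : VB n) * rho i = 1 := by
  by_cases h : 1 ≤ i ∧ i ≤ n - 1
  · have := rel_one (r := fR (⟨i-1, by omega⟩ : Fin (n-1)) * fR ⟨i-1, by omega⟩)
      (Or.inr <| Or.inr <| Or.inr <| Or.inr <| Or.inl ⟨_, rfl⟩)
    rw [map_mul, mk_fR] at this
    have e : i - 1 + 1 = i := by omega
    rwa [e] at this
  · rw [rho_out i h, mul_one]

lemma rho_inv (i : ℕ) : (rho i : VB n)⁻¹ = rho i := by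
  rw [inv_eq_iff_mul_eq_one]; exact rho_sq i

end Dev
section Dev2
variable {n : ℕ}

lemma braid_rho (i : ℕ) (h1 : 1 ≤ i) (h2 : i + 1 ≤ n - 1) :
    (rho i : VB n) * rho (i+1) * rho i = rho (i+1) * rho i * rho (i+1) := by
  have := rel_one (r := fR (⟨i-1, by omega⟩ : Fin (n-1)) * fR ⟨i, by omega⟩ * fR ⟨i-1, by omega⟩
      * (fR ⟨i, by omega⟩ * fR ⟨i-1, by omega⟩ * fR ⟨i, by omega⟩)⁻¹)
    (Or.inr <| Or.inr <| Or.inl ⟨⟨i-1, by omega⟩, ⟨i, by omega⟩, by simp; omega, rfl⟩)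
  simp only [map_mul, map_inv, mk_fR] at this
  have e : i - 1 + 1 = i := by omega
  rw [e] at this
  rw [mul_inv_eq_one] at this
  exact this

lemma comm_rho (i j : ℕ) (h : i + 2 ≤ j ∨ j + 2 ≤ i) :
    (rho i : VB n) * rho j = rho j * rho i := by
  -- reduce to the case i + 2 ≤ j
  have key : ∀ a b : ℕ, a + 2 ≤ b → (rho a : VB n) * rho b = rho b * rho a := by
    intro a b hab
    by_cases ha : 1 ≤ a ∧ a ≤ n - 1
    · by_cases hb : 1 ≤ b ∧ b ≤ n - 1
      · have := rel_one (r := fR (⟨a-1, by omega⟩ : Fin (n-1)) * fR ⟨b-1, by omega⟩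
            * (fR ⟨b-1, by omega⟩ * fR ⟨a-1, by omega⟩)⁻¹)
          (Or.inr <| Or.inr <| Or.inr <| Or.inl ⟨⟨a-1, by omega⟩, ⟨b-1, by omega⟩, by simp; omega, rfl⟩)
        simp only [map_mul, map_inv, mk_fR] at this
        have ea : a - 1 + 1 = a := by omega
        have eb : b - 1 + 1 = b := by omega
        rw [ea, eb, mul_inv_eq_one] at this
        exact this
      · rw [rho_out b hb, mul_one, one_mul]
    · rw [rho_out a ha, mul_one, one_mul]
  rcases h with h | h
  · exact key i j h
  · exact (key j i h).symm

lemma comm_sig_rho (i j : ℕ) (h : i + 2 ≤ j ∨ j + 2 ≤ i) :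
    (sig i : VB n) * rho j = rho j * sig i := by
  by_cases ha : 1 ≤ i ∧ i ≤ n - 1
  · by_cases hb : 1 ≤ j ∧ j ≤ n - 1
    · have := rel_one (r := fS (⟨i-1, by omega⟩ : Fin (n-1)) * fR ⟨j-1, by omega⟩
          * (fR ⟨j-1, by omega⟩ * fS ⟨i-1, by omega⟩)⁻¹)
        (Or.inr <| Or.inr <| Or.inr <| Or.inr <| Or.inr <| Or.inl
          ⟨⟨i-1, by omega⟩, ⟨j-1, by omega⟩, by simp; omega, rfl⟩)
      simp only [map_mul, map_inv, mk_fR, mk_fS] at this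
      have ea : i - 1 + 1 = i := by omega
      have eb : j - 1 + 1 = j := by omega
      rw [ea, eb, mul_inv_eq_one] at this
      exact this
    · rw [rho_out j hb, mul_one, one_mul]
  · rw [sig_out i ha, mul_one, one_mul]

lemma mixed_rel (i : ℕ) (h1 : 1 ≤ i) (h2 : i + 1 ≤ n - 1) :
    (rho i : VB n) * rho (i+1) * sig i = sig (i+1) * rho i * rho (i+1) := by
  have := rel_one (r := fR (⟨i-1, by omega⟩ : Fin (n-1)) * fR ⟨i, by omega⟩ * fS ⟨i-1, by omega⟩
      * (fS ⟨i, by omega⟩ * fR ⟨i-1, by omega⟩ * fR ⟨i, by omega⟩)⁻¹)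
    (Or.inr <| Or.inr <| Or.inr <| Or.inr <| Or.inr <| Or.inr
      ⟨⟨i-1, by omega⟩, ⟨i, by omega⟩, by simp; omega, rfl⟩)
  simp only [map_mul, map_inv, mk_fR, mk_fS] at this
  have e : i - 1 + 1 = i := by omega
  rw [e, mul_inv_eq_one] at this
  exact this

end Dev2
section Abstract
variable {G : Type*} [Group G]

lemma abstract_cores (u v x y : G) (hu : u * u = 1) (hv : v * v = 1)
    (hbr : u * v * u = v * u * v) (hm : u * v * x = y * (u * v)) :
    (u * (v * y⁻¹) * u = v * (u * x⁻¹) * v) ∧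
    (u * v * (u * x⁻¹) * v * u = v * y⁻¹) ∧
    (u * (y⁻¹ * v) * u = v * (x⁻¹ * u) * v) ∧
    (u * v * (x⁻¹ * u) * v * u = y⁻¹ * v) := by
  have hui : u⁻¹ = u := by rw [inv_eq_iff_mul_eq_one, hu]
  have hvi : v⁻¹ = v := by rw [inv_eq_iff_mul_eq_one, hv]
  have hu' : ∀ z : G, u * (u * z) = z := fun z => by rw [← mul_assoc, hu, one_mul]
  have hv' : ∀ z : G, v * (v * z) = z := fun z => by rw [← mul_assoc, hv, one_mul]
  have hbr' : ∀ z : G, u * (v * (u * z)) = v * (u * (v * z)) := fun z => by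
    calc u * (v * (u * z)) = (u * v * u) * z := by simp only [mul_assoc]
    _ = (v * u * v) * z := by rw [hbr]
    _ = v * (u * (v * z)) := by simp only [mul_assoc]
  have hx : x = v * (u * (y * (u * v))) := by
    have h2 := congrArg (fun t => v * (u * t)) hm
    simp only [mul_assoc, hu', hv'] at h2
    exact h2
  have hxi : x⁻¹ = v * (u * (y⁻¹ * (u * v))) := by
    rw [hx]; simp only [mul_inv_rev, hui, hvi, mul_assoc]
  refine ⟨?_, ?_, ?_, ?_⟩
  · rw [hxi]; simp only [mul_assoc, hu, hv, mul_one, hv', hu', ← hbr']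
  · rw [hxi]; simp only [mul_assoc, hu, hv, mul_one, hv', hu', ← hbr']
  · rw [hxi]; simp only [mul_assoc, hu, hv, mul_one, hv', hu', hbr']
  · rw [hxi]; simp only [mul_assoc, hu, hv, mul_one, hv', hu', hbr']

end Abstract
section Cores
variable {n : ℕ}

lemma coreA (k : ℕ) : (rho k : VB n) * (rho k * (sig k)⁻¹) * rho k = (sig k)⁻¹ * rho k := by
  rw [← mul_assoc, rho_sq, one_mul]

lemma coreA' (l : ℕ) : (rho l : VB n) * ((sig l)⁻¹ * rho l) * rho l = rho l * (sig l)⁻¹ := by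
  rw [mul_assoc, mul_assoc, rho_sq, mul_one]

lemma abstract_pack (a : ℕ) (h1 : 1 ≤ a) (h2 : a + 1 ≤ n - 1) :
    ((rho a : VB n) * (rho (a+1) * (sig (a+1))⁻¹) * rho a
        = rho (a+1) * (rho a * (sig a)⁻¹) * rho (a+1)) ∧
    ((rho a : VB n) * rho (a+1) * (rho a * (sig a)⁻¹) * rho (a+1) * rho a
        = rho (a+1) * (sig (a+1))⁻¹) ∧
    ((rho a : VB n) * ((sig (a+1))⁻¹ * rho (a+1)) * rho a
        = rho (a+1) * ((sig a)⁻¹ * rho a) * rho (a+1)) ∧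
    ((rho a : VB n) * rho (a+1) * ((sig a)⁻¹ * rho a) * rho (a+1) * rho a
        = (sig (a+1))⁻¹ * rho (a+1)) := by
  have hm := mixed_rel (n := n) a h1 h2
  rw [mul_assoc (sig (a+1))] at hm
  exact abstract_cores (rho a) (rho (a+1)) (sig a) (sig (a+1)) (rho_sq a) (rho_sq (a+1))
    (braid_rho a h1 h2) hm

lemma coreB (k : ℕ) (h1 : 2 ≤ k) (h2 : k ≤ n - 1) :
    (rho (k-1) : VB n) * (rho k * (sig k)⁻¹) * rho (k-1)
      = rho k * (rho (k-1) * (sig (k-1))⁻¹) * rho k := by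
  have := (abstract_pack (n := n) (k-1) (by omega) (by omega)).1
  have e : k - 1 + 1 = k := by omega
  rwa [e] at this

lemma coreC (k : ℕ) (h1 : 1 ≤ k) (h2 : k + 1 ≤ n - 1) :
    (rho k : VB n) * rho (k+1) * (rho k * (sig k)⁻¹) * rho (k+1) * rho k
      = rho (k+1) * (sig (k+1))⁻¹ :=
  (abstract_pack k h1 h2).2.1

lemma coreB' (l : ℕ) (h1 : 2 ≤ l) (h2 : l ≤ n - 1) :
    (rho (l-1) : VB n) * ((sig l)⁻¹ * rho l) * rho (l-1)
      = rho l * ((sig (l-1))⁻¹ * rho (l-1)) * rho l := by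
  have := (abstract_pack (n := n) (l-1) (by omega) (by omega)).2.2.1
  have e : l - 1 + 1 = l := by omega
  rwa [e] at this

lemma coreC' (l : ℕ) (h1 : 1 ≤ l) (h2 : l + 1 ≤ n - 1) :
    (rho l : VB n) * rho (l+1) * ((sig l)⁻¹ * rho l) * rho (l+1) * rho l
      = (sig (l+1))⁻¹ * rho (l+1) :=
  (abstract_pack l h1 h2).2.2.2

end Cores
section Words
variable {n : ℕ}

lemma asc_nil (a b : ℕ) (h : b < a) : (asc a b : VB n) = 1 := by
  have : b + 1 - a = 0 := by omega
  rw [asc, this]; rfl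

lemma desc_nil (a b : ℕ) (h : b < a) : (desc a b : VB n) = 1 := by
  have : b + 1 - a = 0 := by omega
  rw [desc, this]; rfl

lemma asc_cons (a b : ℕ) (h : a ≤ b) : (asc a b : VB n) = rho a * asc (a+1) b := by
  have e : b + 1 - a = (b + 1 - (a+1)) + 1 := by omega
  rw [asc, asc, e, List.range'_succ, List.map_cons, List.prod_cons]

lemma asc_concat (a b : ℕ) (ha : 1 ≤ a) (h : a ≤ b) : (asc a b : VB n) = asc a (b-1) * rho b := by
  have e : b + 1 - a = (b - a) + 1 := by omega
  have e2 : b - 1 + 1 - a = b - a := by omega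
  have e3 : a + 1 * (b - a) = b := by omega
  rw [asc, asc, e, e2, List.range'_concat, e3, List.map_append, List.prod_append,
    List.map_singleton, List.prod_singleton]

lemma desc_cons (a b : ℕ) (ha : 1 ≤ a) (h : a ≤ b) : (desc a b : VB n) = rho b * desc a (b-1) := by
  have e : b + 1 - a = (b - a) + 1 := by omega
  have e2 : b - 1 + 1 - a = b - a := by omega
  have e3 : a + 1 * (b - a) = b := by omega
  rw [desc, desc, e, e2, List.range'_concat, e3, List.map_append, List.reverse_append,
    List.prod_append, List.map_singleton, List.reverse_singleton, List.prod_singleton]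

lemma desc_concat (a b : ℕ) (h : a ≤ b) : (desc a b : VB n) = desc (a+1) b * rho a := by
  have e : b + 1 - a = (b + 1 - (a+1)) + 1 := by omega
  rw [desc, desc, e, List.range'_succ, List.map_cons, List.reverse_cons, List.prod_append,
    List.prod_singleton]

lemma list_rev_prod (L : List ℕ) :
    ((L.map (rho (n:=n))).reverse).prod * (L.map (rho (n:=n))).prod = 1 := by
  induction L with
  | nil => simp
  | cons x L ih =>
    simp only [List.map_cons, List.reverse_cons, List.prod_append, List.prod_cons,
      List.prod_singleton, List.prod_nil, mul_one]
    calc ((L.map (rho (n:=n))).reverse).prod * rho x * (rho x * (L.map (rho (n:=n))).prod)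
        = ((L.map (rho (n:=n))).reverse).prod * (rho x * rho x) * (L.map (rho (n:=n))).prod := by
          simp only [mul_assoc]
      _ = 1 := by rw [rho_sq, mul_one, ih]

lemma desc_mul_asc (a b : ℕ) : (desc a b : VB n) * asc a b = 1 :=
  list_rev_prod _

lemma desc_eq_inv (a b : ℕ) : (desc a b : VB n) = (asc a b)⁻¹ :=
  eq_inv_of_mul_eq_one_left (desc_mul_asc a b)

lemma asc_mul_desc (a b : ℕ) : (asc a b : VB n) * desc a b = 1 := by
  rw [desc_eq_inv, mul_inv_cancel]

lemma rho_comm_list (j : ℕ) (L : List ℕ) (h : ∀ e ∈ L, j + 2 ≤ e ∨ e + 2 ≤ j) :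
    (rho j : VB n) * (L.map (rho (n:=n))).prod = (L.map (rho (n:=n))).prod * rho j := by
  induction L with
  | nil => simp
  | cons x L ih =>
    simp only [List.map_cons, List.prod_cons, ← mul_assoc]
    rw [comm_rho j x (by have := h x (by simp); tauto), mul_assoc, mul_assoc,
      ih (fun e he => h e (by simp [he]))]

lemma mem_range'_bounds {a m e : ℕ} (h : e ∈ List.range' a m) : a ≤ e ∧ e < a + m := by
  rw [List.mem_range'] at h
  obtain ⟨i, hi, rfl⟩ := h
  omega

lemma rho_comm_asc (j a b : ℕ) (h : j + 2 ≤ a ∨ b + 2 ≤ j) :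
    (rho j : VB n) * asc a b = asc a b * rho j := by
  rw [asc]
  exact rho_comm_list j _ (fun e he => by have := mem_range'_bounds he; omega)

lemma rho_comm_desc (j a b : ℕ) (h : j + 2 ≤ a ∨ b + 2 ≤ j) :
    (rho j : VB n) * desc a b = desc a b * rho j := by
  rw [desc, ← List.map_reverse]
  refine rho_comm_list j _ (fun e he => ?_)
  rw [List.mem_reverse] at he
  have := mem_range'_bounds he; omega

lemma rho_desc_shift_aux (b : ℕ) (hb : b ≤ n - 1) :
    ∀ d a i, i = a + d → 1 ≤ a → i + 1 ≤ b →
      (rho i : VB n) * desc a b = desc a b * rho (i+1) := by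
  intro d
  induction d with
  | zero =>
    intro a i he ha hib
    obtain rfl : i = a := by omega
    have h1 : (desc i b : VB n) = desc (i+2) b * rho (i+1) * rho i := by
      rw [desc_concat i b (by omega), desc_concat (i+1) b (by omega)]
    rw [h1]
    calc (rho i : VB n) * (desc (i+2) b * rho (i+1) * rho i)
        = desc (i+2) b * (rho i * rho (i+1) * rho i) := by
          rw [← mul_assoc, ← mul_assoc, rho_comm_desc i (i+2) b (by omega)]
          simp only [mul_assoc]
      _ = desc (i+2) b * (rho (i+1) * rho i * rho (i+1)) := by
          rw [braid_rho i ha (by omega)]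
      _ = desc (i+2) b * rho (i+1) * rho i * rho (i+1) := by simp only [mul_assoc]
  | succ d ih =>
    intro a i he ha hib
    have hai : a + 1 ≤ i := by omega
    rw [desc_concat a b (by omega), ← mul_assoc, ih (a+1) i (by omega) (by omega) hib]
    rw [mul_assoc, mul_assoc, comm_rho a (i+1) (by omega)]

lemma rho_desc_shift (a b i : ℕ) (hb : b ≤ n - 1) (ha : 1 ≤ a) (hai : a ≤ i)
    (hib : i + 1 ≤ b) : (rho i : VB n) * desc a b = desc a b * rho (i+1) :=
  rho_desc_shift_aux b hb (i - a) a i (by omega) ha hib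

lemma asc_rho_shift (a b i : ℕ) (hb : b ≤ n - 1) (ha : 1 ≤ a) (hai : a ≤ i)
    (hib : i + 1 ≤ b) : (asc a b : VB n) * rho i = rho (i+1) * asc a b := by
  have h := rho_desc_shift a b i hb ha hai hib
  rw [desc_eq_inv] at h
  have h2 := congrArg Inv.inv h
  simpa only [mul_inv_rev, inv_inv, rho_inv] using h2

end Words
section Helpers
variable {n : ℕ}

/-- The transposition (i, i+1) acting on ℕ. -/
def sw (i k : ℕ) : ℕ := if k = i then i+1 else if k = i+1 then i else k

lemma sw_self (i k : ℕ) (h : k ≠ i ∧ k ≠ i+1) : sw i k = k := by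
  rw [sw, if_neg h.1, if_neg h.2]

lemma sw_fst (i : ℕ) : sw i i = i + 1 := by rw [sw, if_pos rfl]

lemma sw_snd (i : ℕ) : sw i (i+1) = i := by
  rw [sw, if_neg (by omega), if_pos rfl]

lemma comm_inv_right {G : Type*} [Group G] {a b : G} (h : b * a = a * b) :
    a * b⁻¹ = b⁻¹ * a := by
  calc a * b⁻¹ = b⁻¹ * (b * a) * b⁻¹ := by rw [inv_mul_cancel_left]
    _ = b⁻¹ * (a * b) * b⁻¹ := by rw [h]
    _ = b⁻¹ * a := by rw [mul_assoc, mul_assoc, mul_inv_cancel, mul_one]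

lemma rho_comm_coreL (j k : ℕ) (h : j + 2 ≤ k ∨ k + 2 ≤ j) :
    (rho j : VB n) * (rho k * (sig k)⁻¹) = (rho k * (sig k)⁻¹) * rho j := by
  have h1 := comm_rho (n := n) j k h
  have h2 : (rho j : VB n) * (sig k)⁻¹ = (sig k)⁻¹ * rho j :=
    comm_inv_right (comm_sig_rho k j (by tauto))
  calc (rho j : VB n) * (rho k * (sig k)⁻¹) = (rho j * rho k) * (sig k)⁻¹ := by
        rw [mul_assoc]
    _ = rho k * (rho j * (sig k)⁻¹) := by rw [h1, mul_assoc]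
    _ = (rho k * (sig k)⁻¹) * rho j := by rw [h2, mul_assoc]

lemma rho_comm_coreR (j k : ℕ) (h : j + 2 ≤ k ∨ k + 2 ≤ j) :
    (rho j : VB n) * ((sig k)⁻¹ * rho k) = ((sig k)⁻¹ * rho k) * rho j := by
  have h1 := comm_rho (n := n) j k h
  have h2 : (rho j : VB n) * (sig k)⁻¹ = (sig k)⁻¹ * rho j :=
    comm_inv_right (comm_sig_rho k j (by tauto))
  calc (rho j : VB n) * ((sig k)⁻¹ * rho k) = (rho j * (sig k)⁻¹) * rho k := by
        rw [mul_assoc]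
    _ = (sig k)⁻¹ * (rho j * rho k) := by rw [h2, mul_assoc]
    _ = ((sig k)⁻¹ * rho k) * rho j := by rw [h1, mul_assoc]

lemma conj_push (j : ℕ) (D C A : VB n) (hD : rho j * D = D * rho j)
    (hA : rho j * A = A * rho j) :
    rho j * (D * C * A) * rho j = D * (rho j * C * rho j) * A := by
  calc rho j * (D * C * A) * rho j = (rho j * D) * (C * (A * rho j)) := by
        simp only [mul_assoc]
    _ = (D * rho j) * (C * (rho j * A)) := by rw [hD, ← hA]
    _ = D * (rho j * C * rho j) * A := by simp only [mul_assoc]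

lemma conj_fix (j : ℕ) (D C A : VB n) (hD : rho j * D = D * rho j)
    (hC : rho j * C = C * rho j) (hA : rho j * A = A * rho j) :
    rho j * (D * C * A) * rho j = D * C * A := by
  rw [conj_push j D C A hD hA, hC, mul_assoc (C), rho_sq, mul_one]

lemma conj_shift (j : ℕ) (D C A : VB n) (hD : rho j * D = D * rho (j+1))
    (hA : A * rho j = rho (j+1) * A) (hC : rho (j+1) * C = C * rho (j+1)) :
    rho j * (D * C * A) * rho j = D * C * A := by
  calc rho j * (D * C * A) * rho j = (rho j * D) * (C * (A * rho j)) := by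
        simp only [mul_assoc]
    _ = (D * rho (j+1)) * (C * (rho (j+1) * A)) := by rw [hD, hA]
    _ = D * ((rho (j+1) * C) * (rho (j+1) * A)) := by simp only [mul_assoc]
    _ = D * ((C * rho (j+1)) * (rho (j+1) * A)) := by rw [hC]
    _ = D * (C * ((rho (j+1) * rho (j+1)) * A)) := by simp only [mul_assoc]
    _ = D * C * A := by rw [rho_sq, one_mul, mul_assoc]

lemma lam_lt (k l : ℕ) (h : k < l) :
    (lam k l : VB n) = desc (k+1) (l-1) * (rho k * (sig k)⁻¹) * asc (k+1) (l-1) := by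
  rw [lam, if_pos h]

lemma lam_gt (k l : ℕ) (h : l < k) :
    (lam k l : VB n) = desc (l+1) (k-1) * ((sig l)⁻¹ * rho l) * asc (l+1) (k-1) := by
  rw [lam, if_neg (by omega)]

end Helpers
section GenConj
variable {n : ℕ}

lemma gen_conj_lt (i k l : ℕ) (hi1 : 1 ≤ i) (hi2 : i ≤ n - 1) (hk : 1 ≤ k)
    (hl : l ≤ n) (hkl : k < l) :
    (rho i : VB n) * lam k l * rho i = lam (sw i k) (sw i l) := by
  have hn : 2 ≤ n := by omega
  rw [lam_lt k l hkl]
  by_cases c1 : i + 2 ≤ k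
  · rw [sw_self i k ⟨by omega, by omega⟩, sw_self i l ⟨by omega, by omega⟩, lam_lt k l hkl]
    exact conj_fix i _ _ _ (rho_comm_desc i (k+1) (l-1) (by omega))
      (rho_comm_coreL i k (by omega)) (rho_comm_asc i (k+1) (l-1) (by omega))
  by_cases c2 : i + 1 = k
  · subst c2
    rw [sw_snd i, sw_self i l ⟨by omega, by omega⟩, lam_lt i l (by omega)]
    rw [conj_push i _ _ _ (rho_comm_desc i (i+1+1) (l-1) (by omega))
      (rho_comm_asc i (i+1+1) (l-1) (by omega))]
    have hcore : (rho i : VB n) * (rho (i+1) * (sig (i+1))⁻¹) * rho i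
        = rho (i+1) * (rho i * (sig i)⁻¹) * rho (i+1) := by
      have := coreB (n := n) (i+1) (by omega) (by omega)
      have e : i + 1 - 1 = i := by omega
      rwa [e] at this
    rw [hcore]
    have hD : (desc (i+1) (l-1) : VB n) = desc (i+1+1) (l-1) * rho (i+1) :=
      desc_concat (i+1) (l-1) (by omega)
    have hA : (asc (i+1) (l-1) : VB n) = rho (i+1) * asc (i+1+1) (l-1) :=
      asc_cons (i+1) (l-1) (by omega)
    rw [hD, hA]
    simp only [mul_assoc]
  by_cases c3 : i = k
  · subst c3
    rw [sw_fst i]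
    by_cases c4 : l = i + 1
    · subst c4
      rw [sw_snd i, lam_gt (i+1) i (by omega)]
      have e : i + 1 - 1 = i := by omega
      rw [e, desc_nil (i+1) i (by omega), asc_nil (i+1) i (by omega), one_mul, mul_one,
        one_mul, mul_one]
      exact coreA i
    · -- l ≥ i + 2
      rw [sw_self i l ⟨by omega, by omega⟩, lam_lt (i+1) l (by omega)]
      have e2 : i + 1 + 1 = i + 2 := by omega
      rw [e2]
      have hD : (desc (i+1) (l-1) : VB n) = desc (i+2) (l-1) * rho (i+1) :=
        desc_concat (i+1) (l-1) (by omega)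
      have hA : (asc (i+1) (l-1) : VB n) = rho (i+1) * asc (i+2) (l-1) :=
        asc_cons (i+1) (l-1) (by omega)
      have hcore : (rho i : VB n) * (rho (i+1) * (rho i * (sig i)⁻¹) * rho (i+1)) * rho i
          = rho (i+1) * (sig (i+1))⁻¹ := by
        have h5 := coreC (n := n) i hi1 (by omega)
        simp only [mul_assoc] at h5 ⊢
        exact h5
      calc (rho i : VB n) * (desc (i+1) (l-1) * (rho i * (sig i)⁻¹) * asc (i+1) (l-1)) * rho i
          = rho i * (desc (i+2) (l-1) * (rho (i+1) * (rho i * (sig i)⁻¹) * rho (i+1)) *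
            asc (i+2) (l-1)) * rho i := by rw [hD, hA]; simp only [mul_assoc]
        _ = desc (i+2) (l-1) * (rho i * (rho (i+1) * (rho i * (sig i)⁻¹) * rho (i+1)) * rho i) *
            asc (i+2) (l-1) :=
            conj_push i _ _ _ (rho_comm_desc i (i+2) (l-1) (by omega))
              (rho_comm_asc i (i+2) (l-1) (by omega))
        _ = desc (i+2) (l-1) * (rho (i+1) * (sig (i+1))⁻¹) * asc (i+2) (l-1) := by rw [hcore]
  push_neg at c1 c2 c3
  have hki : k + 1 ≤ i := by omega
  by_cases c5 : i + 1 ≤ l - 1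
  · rw [sw_self i k ⟨by omega, by omega⟩, sw_self i l ⟨by omega, by omega⟩, lam_lt k l hkl]
    exact conj_shift i _ _ _
      (rho_desc_shift (k+1) (l-1) i (by omega) (by omega) (by omega) (by omega))
      (asc_rho_shift (k+1) (l-1) i (by omega) (by omega) (by omega) (by omega))
      (rho_comm_coreL (i+1) k (by omega))
  by_cases c6 : i = l - 1
  · subst c6
    rw [sw_self (l-1) k ⟨by omega, by omega⟩]
    have e : sw (l-1) l = l - 1 := by
      rw [sw, if_neg (by omega), if_pos (by omega)]
    rw [e, lam_lt k (l-1) (by omega)]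
    have hD : (desc (k+1) (l-1) : VB n) = rho (l-1) * desc (k+1) (l-1-1) :=
      desc_cons (k+1) (l-1) (by omega) (by omega)
    have hA : (asc (k+1) (l-1) : VB n) = asc (k+1) (l-1-1) * rho (l-1) :=
      asc_concat (k+1) (l-1) (by omega) (by omega)
    rw [hD, hA]
    calc (rho (l-1) : VB n) * (rho (l-1) * desc (k+1) (l-1-1) * (rho k * (sig k)⁻¹) *
          (asc (k+1) (l-1-1) * rho (l-1))) * rho (l-1)
        = (rho (l-1) * rho (l-1)) * (desc (k+1) (l-1-1) * (rho k * (sig k)⁻¹) *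
          asc (k+1) (l-1-1)) * (rho (l-1) * rho (l-1)) := by simp only [mul_assoc]
      _ = desc (k+1) (l-1-1) * (rho k * (sig k)⁻¹) * asc (k+1) (l-1-1) := by
          rw [rho_sq, one_mul, mul_one]
  by_cases c7 : i = l
  · subst c7
    rw [sw_self i k ⟨by omega, by omega⟩, sw_fst i, lam_lt k (i+1) (by omega)]
    have e : i + 1 - 1 = i := by omega
    rw [e]
    have hD : (desc (k+1) i : VB n) = rho i * desc (k+1) (i-1) :=
      desc_cons (k+1) i (by omega) (by omega)
    have hA : (asc (k+1) i : VB n) = asc (k+1) (i-1) * rho i :=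
      asc_concat (k+1) i (by omega) (by omega)
    rw [hD, hA]
    simp only [mul_assoc]
  · have hil : l + 1 ≤ i := by omega
    rw [sw_self i k ⟨by omega, by omega⟩, sw_self i l ⟨by omega, by omega⟩, lam_lt k l hkl]
    exact conj_fix i _ _ _ (rho_comm_desc i (k+1) (l-1) (by omega))
      (rho_comm_coreL i k (by omega)) (rho_comm_asc i (k+1) (l-1) (by omega))

end GenConj
section GenConjGt
variable {n : ℕ}

lemma gen_conj_gt (i k l : ℕ) (hi1 : 1 ≤ i) (hi2 : i ≤ n - 1) (hl : 1 ≤ l)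
    (hk : k ≤ n) (hkl : l < k) :
    (rho i : VB n) * lam k l * rho i = lam (sw i k) (sw i l) := by
  have hn : 2 ≤ n := by omega
  rw [lam_gt k l hkl]
  by_cases c1 : i + 2 ≤ l
  · rw [sw_self i k ⟨by omega, by omega⟩, sw_self i l ⟨by omega, by omega⟩, lam_gt k l hkl]
    exact conj_fix i _ _ _ (rho_comm_desc i (l+1) (k-1) (by omega))
      (rho_comm_coreR i l (by omega)) (rho_comm_asc i (l+1) (k-1) (by omega))
  by_cases c2 : i + 1 = l
  · subst c2
    rw [sw_snd i, sw_self i k ⟨by omega, by omega⟩, lam_gt k i (by omega)]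
    rw [conj_push i _ _ _ (rho_comm_desc i (i+1+1) (k-1) (by omega))
      (rho_comm_asc i (i+1+1) (k-1) (by omega))]
    have hcore : (rho i : VB n) * ((sig (i+1))⁻¹ * rho (i+1)) * rho i
        = rho (i+1) * ((sig i)⁻¹ * rho i) * rho (i+1) := by
      have := coreB' (n := n) (i+1) (by omega) (by omega)
      have e : i + 1 - 1 = i := by omega
      rwa [e] at this
    rw [hcore]
    have hD : (desc (i+1) (k-1) : VB n) = desc (i+1+1) (k-1) * rho (i+1) :=
      desc_concat (i+1) (k-1) (by omega)
    have hA : (asc (i+1) (k-1) : VB n) = rho (i+1) * asc (i+1+1) (k-1) :=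
      asc_cons (i+1) (k-1) (by omega)
    rw [hD, hA]
    simp only [mul_assoc]
  by_cases c3 : i = l
  · subst c3
    rw [sw_fst i]
    by_cases c4 : k = i + 1
    · subst c4
      rw [sw_snd i, lam_lt i (i+1) (by omega)]
      have e : i + 1 - 1 = i := by omega
      rw [e, desc_nil (i+1) i (by omega), asc_nil (i+1) i (by omega), one_mul, mul_one,
        one_mul, mul_one]
      exact coreA' i
    · -- k ≥ i + 2
      rw [sw_self i k ⟨by omega, by omega⟩, lam_gt k (i+1) (by omega)]
      have e2 : i + 1 + 1 = i + 2 := by omega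
      rw [e2]
      have hD : (desc (i+1) (k-1) : VB n) = desc (i+2) (k-1) * rho (i+1) :=
        desc_concat (i+1) (k-1) (by omega)
      have hA : (asc (i+1) (k-1) : VB n) = rho (i+1) * asc (i+2) (k-1) :=
        asc_cons (i+1) (k-1) (by omega)
      have hcore : (rho i : VB n) * (rho (i+1) * ((sig i)⁻¹ * rho i) * rho (i+1)) * rho i
          = (sig (i+1))⁻¹ * rho (i+1) := by
        have h5 := coreC' (n := n) i hi1 (by omega)
        simp only [mul_assoc] at h5 ⊢
        exact h5
      calc (rho i : VB n) * (desc (i+1) (k-1) * ((sig i)⁻¹ * rho i) * asc (i+1) (k-1)) * rho i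
          = rho i * (desc (i+2) (k-1) * (rho (i+1) * ((sig i)⁻¹ * rho i) * rho (i+1)) *
            asc (i+2) (k-1)) * rho i := by rw [hD, hA]; simp only [mul_assoc]
        _ = desc (i+2) (k-1) * (rho i * (rho (i+1) * ((sig i)⁻¹ * rho i) * rho (i+1)) * rho i) *
            asc (i+2) (k-1) :=
            conj_push i _ _ _ (rho_comm_desc i (i+2) (k-1) (by omega))
              (rho_comm_asc i (i+2) (k-1) (by omega))
        _ = desc (i+2) (k-1) * ((sig (i+1))⁻¹ * rho (i+1)) * asc (i+2) (k-1) := by rw [hcore]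
  push_neg at c1 c2 c3
  have hli : l + 1 ≤ i := by omega
  by_cases c5 : i + 1 ≤ k - 1
  · rw [sw_self i k ⟨by omega, by omega⟩, sw_self i l ⟨by omega, by omega⟩, lam_gt k l hkl]
    exact conj_shift i _ _ _
      (rho_desc_shift (l+1) (k-1) i (by omega) (by omega) (by omega) (by omega))
      (asc_rho_shift (l+1) (k-1) i (by omega) (by omega) (by omega) (by omega))
      (rho_comm_coreR (i+1) l (by omega))
  by_cases c6 : i = k - 1
  · subst c6
    rw [sw_self (k-1) l ⟨by omega, by omega⟩]
    have e : sw (k-1) k = k - 1 := by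
      rw [sw, if_neg (by omega), if_pos (by omega)]
    rw [e, lam_gt (k-1) l (by omega)]
    have hD : (desc (l+1) (k-1) : VB n) = rho (k-1) * desc (l+1) (k-1-1) :=
      desc_cons (l+1) (k-1) (by omega) (by omega)
    have hA : (asc (l+1) (k-1) : VB n) = asc (l+1) (k-1-1) * rho (k-1) :=
      asc_concat (l+1) (k-1) (by omega) (by omega)
    rw [hD, hA]
    calc (rho (k-1) : VB n) * (rho (k-1) * desc (l+1) (k-1-1) * ((sig l)⁻¹ * rho l) *
          (asc (l+1) (k-1-1) * rho (k-1))) * rho (k-1)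
        = (rho (k-1) * rho (k-1)) * (desc (l+1) (k-1-1) * ((sig l)⁻¹ * rho l) *
          asc (l+1) (k-1-1)) * (rho (k-1) * rho (k-1)) := by simp only [mul_assoc]
      _ = desc (l+1) (k-1-1) * ((sig l)⁻¹ * rho l) * asc (l+1) (k-1-1) := by
          rw [rho_sq, one_mul, mul_one]
  by_cases c7 : i = k
  · subst c7
    rw [sw_self i l ⟨by omega, by omega⟩, sw_fst i, lam_gt (i+1) l (by omega)]
    have e : i + 1 - 1 = i := by omega
    rw [e]
    have hD : (desc (l+1) i : VB n) = rho i * desc (l+1) (i-1) :=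
      desc_cons (l+1) i (by omega) (by omega)
    have hA : (asc (l+1) i : VB n) = asc (l+1) (i-1) * rho i :=
      asc_concat (l+1) i (by omega) (by omega)
    rw [hD, hA]
    simp only [mul_assoc]
  · have hik : k + 1 ≤ i := by omega
    rw [sw_self i k ⟨by omega, by omega⟩, sw_self i l ⟨by omega, by omega⟩, lam_gt k l hkl]
    exact conj_fix i _ _ _ (rho_comm_desc i (l+1) (k-1) (by omega))
      (rho_comm_coreR i l (by omega)) (rho_comm_asc i (l+1) (k-1) (by omega))

end GenConjGt
section Action
variable {n : ℕ}

lemma sw_invol (i k : ℕ) : sw i (sw i k) = k := by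
  unfold sw; split_ifs <;> omega

lemma sw_valid (i k : ℕ) (hi1 : 1 ≤ i) (hi2 : i ≤ n - 1) (hn : 2 ≤ n)
    (hk1 : 1 ≤ k) (hk2 : k ≤ n) : 1 ≤ sw i k ∧ sw i k ≤ n := by
  unfold sw; split_ifs <;> omega

lemma sw_ne (i k l : ℕ) (h : k ≠ l) : sw i k ≠ sw i l := by
  intro he
  have := congrArg (sw i) he
  rw [sw_invol, sw_invol] at this
  exact h this

lemma rho_mem_Rsub (i : ℕ) (h1 : 1 ≤ i) (h2 : i ≤ n - 1) : (rho i : VB n) ∈ Rsub n := by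
  rw [rho_def i h1 h2]
  exact Subgroup.subset_closure ⟨⟨i-1, by omega⟩, rfl⟩

lemma gen_conj (i k l : ℕ) (hi1 : 1 ≤ i) (hi2 : i ≤ n - 1) (hk1 : 1 ≤ k) (hk2 : k ≤ n)
    (hl1 : 1 ≤ l) (hl2 : l ≤ n) (hkl : k ≠ l) :
    (rho i : VB n) * lam k l * rho i = lam (sw i k) (sw i l) := by
  rcases Nat.lt_or_ge k l with h | h
  · exact gen_conj_lt i k l hi1 hi2 hk1 hl2 h
  · exact gen_conj_gt i k l hi1 hi2 hl1 hk2 (by omega)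

/-- the conjugation-stability property carried through the closure induction -/
def Good (n : ℕ) (w : VB n) : Prop :=
  ∀ k l : ℕ, 1 ≤ k → k ≤ n → 1 ≤ l → l ≤ n → k ≠ l →
    (∃ k' l' : ℕ, 1 ≤ k' ∧ k' ≤ n ∧ 1 ≤ l' ∧ l' ≤ n ∧ k' ≠ l' ∧
      w * lam k l * w⁻¹ = lam k' l') ∧
    (∃ k' l' : ℕ, 1 ≤ k' ∧ k' ≤ n ∧ 1 ≤ l' ∧ l' ≤ n ∧ k' ≠ l' ∧
      w⁻¹ * lam k l * w = lam k' l')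

lemma good_one : Good n 1 := by
  intro k l hk1 hk2 hl1 hl2 hkl
  constructor <;> exact ⟨k, l, hk1, hk2, hl1, hl2, hkl, by simp⟩

lemma good_inv {w : VB n} (h : Good n w) : Good n w⁻¹ := by
  intro k l hk1 hk2 hl1 hl2 hkl
  obtain ⟨h1, h2⟩ := h k l hk1 hk2 hl1 hl2 hkl
  rw [inv_inv]
  exact ⟨h2, h1⟩

lemma good_mul {w v : VB n} (hw : Good n w) (hv : Good n v) : Good n (w * v) := by
  intro k l hk1 hk2 hl1 hl2 hkl
  constructor
  · obtain ⟨⟨k1, l1, a1, a2, a3, a4, a5, he⟩, -⟩ := hv k l hk1 hk2 hl1 hl2 hkl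
    obtain ⟨⟨k2, l2, b1, b2, b3, b4, b5, he2⟩, -⟩ := hw k1 l1 a1 a2 a3 a4 a5
    refine ⟨k2, l2, b1, b2, b3, b4, b5, ?_⟩
    rw [mul_inv_rev]
    calc w * v * lam k l * (v⁻¹ * w⁻¹) = w * (v * lam k l * v⁻¹) * w⁻¹ := by
          simp only [mul_assoc]
      _ = w * lam k1 l1 * w⁻¹ := by rw [he]
      _ = lam k2 l2 := he2
  · obtain ⟨-, ⟨k1, l1, a1, a2, a3, a4, a5, he⟩⟩ := hw k l hk1 hk2 hl1 hl2 hkl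
    obtain ⟨-, ⟨k2, l2, b1, b2, b3, b4, b5, he2⟩⟩ := hv k1 l1 a1 a2 a3 a4 a5
    refine ⟨k2, l2, b1, b2, b3, b4, b5, ?_⟩
    rw [mul_inv_rev]
    calc v⁻¹ * w⁻¹ * lam k l * (w * v) = v⁻¹ * (w⁻¹ * lam k l * w) * v := by
          simp only [mul_assoc]
      _ = v⁻¹ * lam k1 l1 * v := by rw [he]
      _ = lam k2 l2 := he2

lemma good_gen (i : ℕ) (h1 : 1 ≤ i) (h2 : i ≤ n - 1) : Good n (rho i) := by
  have hn : 2 ≤ n := by omega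
  intro k l hk1 hk2 hl1 hl2 hkl
  have key : (rho i : VB n) * lam k l * (rho i)⁻¹ = lam (sw i k) (sw i l) := by
    rw [rho_inv]; exact gen_conj i k l h1 h2 hk1 hk2 hl1 hl2 hkl
  have key2 : (rho i : VB n)⁻¹ * lam k l * rho i = lam (sw i k) (sw i l) := by
    rw [rho_inv]; exact gen_conj i k l h1 h2 hk1 hk2 hl1 hl2 hkl
  obtain ⟨g1, g2⟩ := sw_valid i k h1 h2 hn hk1 hk2
  obtain ⟨g3, g4⟩ := sw_valid i l h1 h2 hn hl1 hl2
  exact ⟨⟨sw i k, sw i l, g1, g2, g3, g4, sw_ne i k l hkl, key⟩,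
    ⟨sw i k, sw i l, g1, g2, g3, g4, sw_ne i k l hkl, key2⟩⟩

lemma good_all (w : VB n) (hw : w ∈ Rsub n) : Good n w := by
  induction hw using Subgroup.closure_induction with
  | mem x hx =>
    obtain ⟨i, rfl⟩ := hx
    have := good_gen (n := n) (i + 1) (by omega) (by omega)
    rwa [rho_def (i+1) (by omega) (by omega)] at this
  | one => exact good_one
  | mul x y hx hy gx gy => exact good_mul gx gy
  | inv x hx gx => exact good_inv gx

end Action
section Trans
variable {n : ℕ}

lemma reduce_aux (hn : 2 ≤ n) : ∀ s k l : ℕ, k + l ≤ s → 1 ≤ k → k ≤ n → 1 ≤ l → l ≤ n →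
    k ≠ l → ∃ w ∈ Rsub n, w * lam k l * w⁻¹ = (lam 1 2 : VB n) := by
  intro s
  induction s with
  | zero => intro k l h1 h2; omega
  | succ s ih =>
    intro k l hs hk1 hk2 hl1 hl2 hkl
    -- helper : one conjugation step then recurse
    have step : ∀ i k' l' : ℕ, 1 ≤ i → i ≤ n - 1 → sw i k = k' → sw i l = l' →
        k' + l' ≤ s → (∃ w ∈ Rsub n, w * lam k' l' * w⁻¹ = (lam 1 2 : VB n)) →
        ∃ w ∈ Rsub n, w * lam k l * w⁻¹ = (lam 1 2 : VB n) := by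
      intro i k' l' hi1 hi2 ek el hsum ⟨w, hwmem, hw⟩
      refine ⟨w * rho i, Subgroup.mul_mem _ hwmem (rho_mem_Rsub i hi1 hi2), ?_⟩
      have hconj := gen_conj i k l hi1 hi2 hk1 hk2 hl1 hl2 hkl
      rw [ek, el] at hconj
      rw [mul_inv_rev, rho_inv]
      calc w * rho i * lam k l * (rho i * w⁻¹)
          = w * (rho i * lam k l * rho i) * w⁻¹ := by simp only [mul_assoc]
        _ = w * lam k' l' * w⁻¹ := by rw [hconj]
        _ = lam 1 2 := hw
    rcases Nat.lt_or_ge k l with hlt | hge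
    · by_cases hb : k = 1 ∧ l = 2
      · exact ⟨1, Subgroup.one_mem _, by rw [hb.1, hb.2]; simp⟩
      by_cases hc : k + 1 < l
      · -- conjugate by rho (l-1) to get (k, l-1)
        refine step (l-1) k (l-1) (by omega) (by omega) ?_ ?_ (by omega)
          (ih k (l-1) (by omega) (by omega) (by omega) (by omega) (by omega) (by omega))
        · exact sw_self (l-1) k ⟨by omega, by omega⟩
        · rw [sw, if_neg (by omega), if_pos (by omega)]
      · -- l = k + 1, k ≥ 2 : conjugate by rho (k-1) to get (k-1, l)
        have hk2' : 2 ≤ k := by omega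
        refine step (k-1) (k-1) l (by omega) (by omega) ?_ ?_ (by omega)
          (ih (k-1) l (by omega) (by omega) (by omega) (by omega) (by omega) (by omega))
        · rw [sw, if_neg (by omega), if_pos (by omega)]
        · exact sw_self (k-1) l ⟨by omega, by omega⟩
    · have hgt : l < k := by omega
      by_cases hb : k = 2 ∧ l = 1
      · -- conjugate by rho 1 : (2,1) ↦ (1,2)
        obtain ⟨rfl, rfl⟩ := hb
        refine ⟨rho 1, rho_mem_Rsub 1 (by omega) (by omega), ?_⟩
        have hconj := gen_conj (n := n) 1 2 1 (by omega) (by omega) (by omega) (by omega)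
          (by omega) (by omega) (by omega)
        have e1 : sw 1 2 = 1 := by rw [sw, if_neg (by omega), if_pos rfl]
        have e2 : sw 1 1 = 2 := sw_fst 1
        rw [e1, e2] at hconj
        rw [rho_inv]
        exact hconj
      by_cases hc : l + 1 < k
      · -- conjugate by rho (k-1) to get (k-1, l)
        refine step (k-1) (k-1) l (by omega) (by omega) ?_ ?_ (by omega)
          (ih (k-1) l (by omega) (by omega) (by omega) (by omega) (by omega) (by omega))
        · rw [sw, if_neg (by omega), if_pos (by omega)]
        · exact sw_self (k-1) l ⟨by omega, by omega⟩
      · -- k = l + 1, l ≥ 2 : conjugate by rho (l-1) to get (k, l-1)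
        have hl2' : 2 ≤ l := by omega
        refine step (l-1) k (l-1) (by omega) (by omega) ?_ ?_ (by omega)
          (ih k (l-1) (by omega) (by omega) (by omega) (by omega) (by omega) (by omega))
        · exact sw_self (l-1) k ⟨by omega, by omega⟩
        · rw [sw, if_neg (by omega), if_pos (by omega)]

lemma reduce (hn : 2 ≤ n) (k l : ℕ) (hk1 : 1 ≤ k) (hk2 : k ≤ n) (hl1 : 1 ≤ l) (hl2 : l ≤ n)
    (hkl : k ≠ l) : ∃ w ∈ Rsub n, w * lam k l * w⁻¹ = (lam 1 2 : VB n) :=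
  reduce_aux hn (k + l) k l le_rfl hk1 hk2 hl1 hl2 hkl

end Trans

/-- the subgroup R = ⟨ρ_1, …, ρ_{n-1}⟩ of VB_n acts by
conjugation on the set { λ_{kl} : 1 ≤ k ≠ l ≤ n }, and this action is
transitive. -/
theorem stmt_6 (n : ℕ) (hn : 2 ≤ n) :
    (∀ w ∈ Rsub n, ∀ k l : ℕ, 1 ≤ k → k ≤ n → 1 ≤ l → l ≤ n → k ≠ l →
      ∃ k' l' : ℕ, 1 ≤ k' ∧ k' ≤ n ∧ 1 ≤ l' ∧ l' ≤ n ∧ k' ≠ l' ∧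
        w * lam k l * w⁻¹ = lam k' l') ∧
    (∀ k l k' l' : ℕ, 1 ≤ k → k ≤ n → 1 ≤ l → l ≤ n → k ≠ l →
      1 ≤ k' → k' ≤ n → 1 ≤ l' → l' ≤ n → k' ≠ l' →
      ∃ w ∈ Rsub n, w * lam k l * w⁻¹ = lam k' l') := by
  constructor
  · intro w hw k l hk1 hk2 hl1 hl2 hkl
    exact ((good_all w hw) k l hk1 hk2 hl1 hl2 hkl).1
  · intro k l k' l' hk1 hk2 hl1 hl2 hkl hk1' hk2' hl1' hl2' hkl'
    obtain ⟨w1, m1, h1⟩ := reduce hn k l hk1 hk2 hl1 hl2 hkl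
    obtain ⟨w2, m2, h2⟩ := reduce hn k' l' hk1' hk2' hl1' hl2' hkl'
    refine ⟨w2⁻¹ * w1, Subgroup.mul_mem _ (Subgroup.inv_mem _ m2) m1, ?_⟩
    have h2' : w2⁻¹ * lam 1 2 * w2 = (lam k' l' : VB n) := by
      rw [← h2]; group
    calc (w2⁻¹ * w1) * lam k l * (w2⁻¹ * w1)⁻¹
        = w2⁻¹ * (w1 * lam k l * w1⁻¹) * w2 := by
          rw [mul_inv_rev, inv_inv]; simp only [mul_assoc]
      _ = w2⁻¹ * lam 1 2 * w2 := by rw [h1]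
      _ = lam k' l' := h2'
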